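/- Let M₁, M₂, M₃ be pairwise commuting Hermitian involutions. Then for any density matrix ρ, |Tr(ρM₁M₃) + Tr(ρM₂M₃)| − 1 ≤ Tr(ρM₁M₂) ≤ 1 − |Tr(ρM₁M₃) − Tr(ρM₂M₃)|. -/

import Mathlib

open Matrix
open scoped ComplexOrder

lemma psd_trace_re_nonneg {d : ℕ} {A : Matrix (Fin d) (Fin d) ℂ} (hA : A.PosSemidef) :
    0 ≤ A.trace.re := by
  have hdiag : ∀ i, 0 ≤ A i i := fun i => hA.diag_nonneg
  have : (0:ℝ) ≤ (∑ i, A i i).re := by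
    rw [Complex.re_sum]
    exact Finset.sum_nonneg fun i _ => (Complex.le_def.mp (hdiag i)).1
  simpa [Matrix.trace, Matrix.diag] using this

lemma aux_nonneg {d : ℕ} (ρ : Matrix (Fin d) (Fin d) ℂ) (hρ : ρ.PosSemidef)
    (A B : Matrix (Fin d) (Fin d) ℂ)
    (hA : A.IsHermitian) (hB : B.IsHermitian)
    (hA2 : A * A = 1) (hB2 : B * B = 1) (hAB : A * B = B * A) :
    0 ≤ (ρ * ((1 + A) * (1 + B))).trace.re := by
  set C : Matrix (Fin d) (Fin d) ℂ := (1 + A) * (1 + B) with hC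
  have hcomm : (1 + B) * (1 + A) = (1 + A) * (1 + B) := by
    rw [show (1 + B) * (1 + A) = 1 + A + B + B * A by noncomm_ring,
      show (1 + A) * (1 + B) = 1 + A + B + A * B by noncomm_ring, hAB]
  have hCH : Cᴴ = C := by
    rw [hC, conjTranspose_mul, conjTranspose_add, conjTranspose_add,
      conjTranspose_one, hA.eq, hB.eq, hcomm]
  have hAA : (1 + A) * (1 + A) = (2:ℂ) • (1 + A) := by
    rw [show (1 + A) * (1 + A) = 1 + A + A + A * A by noncomm_ring, hA2]
    rw [show ((2:ℂ) • (1 + A) : Matrix (Fin d) (Fin d) ℂ) = (1 + A) + (1 + A) by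
      rw [two_smul]]
    abel
  have hBB : (1 + B) * (1 + B) = (2:ℂ) • (1 + B) := by
    rw [show (1 + B) * (1 + B) = 1 + B + B + B * B by noncomm_ring, hB2]
    rw [show ((2:ℂ) • (1 + B) : Matrix (Fin d) (Fin d) ℂ) = (1 + B) + (1 + B) by
      rw [two_smul]]
    abel
  have hCC : C * C = (4:ℂ) • C := by
    calc C * C = (1 + A) * ((1 + B) * (1 + A)) * (1 + B) := by rw [hC]; noncomm_ring
      _ = ((1 + A) * (1 + A)) * ((1 + B) * (1 + B)) := by rw [hcomm]; noncomm_ring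
      _ = (2:ℂ) • (1 + A) * ((2:ℂ) • (1 + B)) := by rw [hAA, hBB]
      _ = (4:ℂ) • C := by
          rw [hC, smul_mul_assoc, mul_smul_comm, smul_smul]; norm_num
  have hpsd : (C * ρ * Cᴴ).PosSemidef := hρ.mul_mul_conjTranspose_same C
  have htr : (C * ρ * Cᴴ).trace = (4:ℂ) * (ρ * C).trace := by
    rw [hCH]
    calc (C * ρ * C).trace = (C * C * ρ).trace := by
          rw [Matrix.trace_mul_comm (C * ρ) C, ← mul_assoc]
      _ = (ρ * (C * C)).trace := by rw [Matrix.trace_mul_comm (C * C) ρ]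
      _ = (ρ * ((4:ℂ) • C)).trace := by rw [hCC]
      _ = (4:ℂ) * (ρ * C).trace := by rw [Matrix.mul_smul, Matrix.trace_smul, smul_eq_mul]
  have h0 : 0 ≤ (C * ρ * Cᴴ).trace.re := psd_trace_re_nonneg hpsd
  rw [htr] at h0
  have h4 : ((4:ℂ) * (ρ * C).trace).re = 4 * (ρ * C).trace.re := by
    simp [Complex.mul_re]
  rw [h4] at h0
  linarith

theorem commuting_involutions_abs_bounds (d : ℕ)
    (M₁ M₂ M₃ : Matrix (Fin d) (Fin d) ℂ)
    (h₁ : M₁.IsHermitian) (h₂ : M₂.IsHermitian) (h₃ : M₃.IsHermitian)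
    (hinv₁ : M₁ * M₁ = 1) (hinv₂ : M₂ * M₂ = 1) (hinv₃ : M₃ * M₃ = 1)
    (hc₁₂ : M₁ * M₂ = M₂ * M₁) (hc₁₃ : M₁ * M₃ = M₃ * M₁) (hc₂₃ : M₂ * M₃ = M₃ * M₂)
    (ρ : Matrix (Fin d) (Fin d) ℂ)
    (hρ : ρ.PosSemidef) (htr : ρ.trace = 1) :
    |((ρ * (M₁ * M₃)).trace.re) + ((ρ * (M₂ * M₃)).trace.re)| - 1
      ≤ ((ρ * (M₁ * M₂)).trace.re) ∧
    ((ρ * (M₁ * M₂)).trace.re)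
      ≤ 1 - |((ρ * (M₁ * M₃)).trace.re) - ((ρ * (M₂ * M₃)).trace.re)| := by
  have hAH : (M₁ * M₃).IsHermitian := by
    rw [Matrix.IsHermitian, conjTranspose_mul, h₁.eq, h₃.eq, ← hc₁₃]
  have hBH : (M₂ * M₃).IsHermitian := by
    rw [Matrix.IsHermitian, conjTranspose_mul, h₂.eq, h₃.eq, ← hc₂₃]
  have hA2 : (M₁ * M₃) * (M₁ * M₃) = 1 := by
    calc M₁ * M₃ * (M₁ * M₃) = M₁ * (M₃ * M₁) * M₃ := by noncomm_ring
      _ = M₁ * M₁ * (M₃ * M₃) := by rw [← hc₁₃]; noncomm_ring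
      _ = 1 := by rw [hinv₁, hinv₃, one_mul]
  have hB2 : (M₂ * M₃) * (M₂ * M₃) = 1 := by
    calc M₂ * M₃ * (M₂ * M₃) = M₂ * (M₃ * M₂) * M₃ := by noncomm_ring
      _ = M₂ * M₂ * (M₃ * M₃) := by rw [← hc₂₃]; noncomm_ring
      _ = 1 := by rw [hinv₂, hinv₃, one_mul]
  have hABeq : (M₁ * M₃) * (M₂ * M₃) = M₁ * M₂ := by
    calc M₁ * M₃ * (M₂ * M₃) = M₁ * (M₃ * M₂) * M₃ := by noncomm_ring
      _ = M₁ * M₂ * (M₃ * M₃) := by rw [← hc₂₃]; noncomm_ring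
      _ = M₁ * M₂ := by rw [hinv₃, mul_one]
  have hBAeq : (M₂ * M₃) * (M₁ * M₃) = M₁ * M₂ := by
    calc M₂ * M₃ * (M₁ * M₃) = M₂ * (M₃ * M₁) * M₃ := by noncomm_ring
      _ = M₂ * M₁ * (M₃ * M₃) := by rw [← hc₁₃]; noncomm_ring
      _ = M₁ * M₂ := by rw [hinv₃, mul_one, hc₁₂]
  have hAB : (M₁ * M₃) * (M₂ * M₃) = (M₂ * M₃) * (M₁ * M₃) := by rw [hABeq, hBAeq]
  have expand : ∀ X Y : Matrix (Fin d) (Fin d) ℂ,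
      (ρ * ((1 + X) * (1 + Y))).trace
        = ρ.trace + (ρ * X).trace + (ρ * Y).trace + (ρ * (X * Y)).trace := by
    intro X Y
    have h : (1 + X) * (1 + Y) = 1 + X + Y + X * Y := by noncomm_ring
    rw [h, Matrix.mul_add, Matrix.mul_add, Matrix.mul_add, Matrix.trace_add,
      Matrix.trace_add, Matrix.trace_add, Matrix.mul_one]
  have key : ∀ X Y : Matrix (Fin d) (Fin d) ℂ,
      X.IsHermitian → Y.IsHermitian → X * X = 1 → Y * Y = 1 → X * Y = Y * X →
      0 ≤ 1 + (ρ * X).trace.re + (ρ * Y).trace.re + (ρ * (X * Y)).trace.re := by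
    intro X Y hX hY hX2 hY2 hXY
    have h := aux_nonneg ρ hρ X Y hX hY hX2 hY2 hXY
    rw [expand X Y, htr] at h
    simpa [Complex.add_re] using h
  have k1 := key (M₁ * M₃) (M₂ * M₃) hAH hBH hA2 hB2 hAB
  have k2 := key (-(M₁ * M₃)) (-(M₂ * M₃)) hAH.neg hBH.neg (by rw [neg_mul_neg, hA2])
    (by rw [neg_mul_neg, hB2]) (by rw [neg_mul_neg, neg_mul_neg, hAB])
  have k3 := key (M₁ * M₃) (-(M₂ * M₃)) hAH hBH.neg hA2 (by rw [neg_mul_neg, hB2])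
    (by rw [mul_neg, neg_mul, hAB])
  have k4 := key (-(M₁ * M₃)) (M₂ * M₃) hAH.neg hBH (by rw [neg_mul_neg, hA2]) hB2
    (by rw [neg_mul, mul_neg, hAB])
  simp only [Matrix.mul_neg, Matrix.neg_mul, neg_neg, Matrix.trace_neg, Complex.neg_re,
    hABeq] at k1 k2 k3 k4
  set a := (ρ * (M₁ * M₃)).trace.re with ha
  set b := (ρ * (M₂ * M₃)).trace.re with hb
  set c := (ρ * (M₁ * M₂)).trace.re with hc
  constructor
  · have h : |a + b| ≤ 1 + c := abs_le.mpr ⟨by linarith, by linarith⟩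
    linarith
  · have h : |a - b| ≤ 1 - c := abs_le.mpr ⟨by linarith, by linarith⟩
    linarith
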